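/- Let n ≥ 1, let 𝒜 = {A^1, …, A^ℓ} ⊆ S^n, let Q ∈ S^n, and let H¹ = diag(0,…,0,1) ∈ S^n. Assume that Q_{ij} ≤ 0 for all distinct i, j ∈ {1,…,n} and that (−A^k)_{ij} ≤ 0 for all distinct i, j ∈ {1,…,n} and every k ∈ {1,…,ℓ}. If the problem inf{⟨Q,X⟩ : X ∈ J_+(𝒜), ⟨H¹,X⟩ = 1} has an optimal solution, then it has a rank-1 optimal solution, i.e., there exists x ∈ ℝ^n with x·xᵀ ∈ J_+(𝒜), (x·xᵀ)_{nn} = 1, and ⟨Q, x·xᵀ⟩ ≤ ⟨Q, X⟩ for every X ∈ J_+(𝒜) with X_{nn} = 1. -/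

import Mathlib

open Matrix

lemma psd_diag_nonneg {n : ℕ} {M : Matrix (Fin n) (Fin n) ℝ} (hM : M.PosSemidef) (i : Fin n) :
    0 ≤ M i i := by
  have := hM.dotProduct_mulVec_nonneg (Pi.single i 1)
  simpa [dotProduct, mulVec, Pi.single_apply, Finset.mul_sum] using this

lemma psd_quad {n : ℕ} {M : Matrix (Fin n) (Fin n) ℝ} (hM : M.PosSemidef) (i j : Fin n) (t : ℝ) :
    0 ≤ M i i * t^2 + (2 * M i j) * t + M j j := by
  have hsym : M j i = M i j := by
    have h := congrFun (congrFun hM.isHermitian i) j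
    simpa [conjTranspose_apply] using h
  have key := hM.dotProduct_mulVec_nonneg (t • (Pi.single i 1 : Fin n → ℝ) + (Pi.single j 1 : Fin n → ℝ))
  simp only [star_trivial, mulVec_add, mulVec_smul, dotProduct_add, add_dotProduct,
    smul_dotProduct, dotProduct_smul, smul_eq_mul, mulVec_single, single_dotProduct,
    dotProduct_single, mul_one, one_mul, Matrix.col_apply, MulOpposite.op_one, one_smul] at key
  rw [hsym] at key; ring_nf at key ⊢; linarith [key]

lemma psd_sq_le {n : ℕ} {M : Matrix (Fin n) (Fin n) ℝ} (hM : M.PosSemidef) (i j : Fin n) :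
    M i j ^ 2 ≤ M i i * M j j := by
  have hd := discrim_le_zero (a := M i i) (b := 2 * M i j) (c := M j j) (fun t => by have := psd_quad hM i j t; nlinarith [this])
  simp only [discrim] at hd
  nlinarith [hd]

noncomputable section

/-- Lemma 4.2, sign pattern condition.  Matrices have size
`n = m+1` (so `n ≥ 1`); the last coordinate plays the role of the index `n`, and
`H¹ = diag(0,…,0,1)`. -/
theorem stmt_8 (m ℓ : ℕ) (A : Fin ℓ → Matrix (Fin (m+1)) (Fin (m+1)) ℝ)
    (Q : Matrix (Fin (m+1)) (Fin (m+1)) ℝ)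
    (hQsym : Q.IsSymm) (hAsym : ∀ k, (A k).IsSymm)
    (hQsign : ∀ i j, i ≠ j → Q i j ≤ 0)
    (hAsign : ∀ k, ∀ i j, i ≠ j → (-(A k)) i j ≤ 0)
    (H1 : Matrix (Fin (m+1)) (Fin (m+1)) ℝ)
    (hH1 : H1 = Matrix.diagonal (fun i => if i = Fin.last m then (1 : ℝ) else 0))
    -- the problem inf{⟨Q,X⟩ : X ∈ J_+(𝒜), ⟨H¹,X⟩ = 1} has an optimal solution
    (hopt : ∃ Xs : Matrix (Fin (m+1)) (Fin (m+1)) ℝ,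
      (Xs.PosSemidef ∧ (∀ k, 0 ≤ (A k * Xs).trace) ∧ (H1 * Xs).trace = 1) ∧
      ∀ X : Matrix (Fin (m+1)) (Fin (m+1)) ℝ, X.PosSemidef →
        (∀ k, 0 ≤ (A k * X).trace) → (H1 * X).trace = 1 →
        (Q * Xs).trace ≤ (Q * X).trace) :
    -- it has a rank-1 optimal solution
    ∃ x : Fin (m+1) → ℝ,
      (vecMulVec x x).PosSemidef ∧ (∀ k, 0 ≤ (A k * vecMulVec x x).trace) ∧
      (vecMulVec x x) (Fin.last m) (Fin.last m) = 1 ∧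
      ∀ X : Matrix (Fin (m+1)) (Fin (m+1)) ℝ, X.PosSemidef →
        (∀ k, 0 ≤ (A k * X).trace) → X (Fin.last m) (Fin.last m) = 1 →
        (Q * vecMulVec x x).trace ≤ (Q * X).trace := by

  obtain ⟨Xs, ⟨hPSD, hAfeas, hHfeas⟩, hoptmin⟩ := hopt
  have htr : ∀ X : Matrix (Fin (m+1)) (Fin (m+1)) ℝ,
      (H1 * X).trace = X (Fin.last m) (Fin.last m) := by
    intro X
    subst hH1
    simp [Matrix.trace, Matrix.diag, Matrix.diagonal_mul, ite_mul]
  set x : Fin (m+1) → ℝ := fun i => Real.sqrt (Xs i i) with hx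
  set P := vecMulVec x x with hP
  have hdiagnn : ∀ i, 0 ≤ Xs i i := psd_diag_nonneg hPSD
  have hPdiag : ∀ i, P i i = Xs i i := by
    intro i
    simp [hP, vecMulVec_apply, hx, Real.mul_self_sqrt (hdiagnn i)]
  have hentry : ∀ i j, Xs i j ≤ P i j := by
    intro i j
    have h1 := psd_sq_le hPSD i j
    have h2 : Xs i j ≤ Real.sqrt (Xs i i * Xs j j) := by
      calc Xs i j ≤ |Xs i j| := le_abs_self _
        _ = Real.sqrt ((Xs i j)^2) := (Real.sqrt_sq_eq_abs _).symm
        _ ≤ Real.sqrt (Xs i i * Xs j j) := Real.sqrt_le_sqrt h1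
    simpa [hP, vecMulVec_apply, hx, Real.sqrt_mul (hdiagnn i)] using h2
  have hPpsd : P.PosSemidef := by
    apply Matrix.PosSemidef.of_dotProduct_mulVec_nonneg
    · ext i j
      simp [hP, conjTranspose_apply, vecMulVec_apply, mul_comm]
    · intro y
      have hcalc : dotProduct (star y) (P *ᵥ y) = (∑ i, y i * x i)^2 := by
        rw [sq, Finset.sum_mul_sum]
        simp only [star_trivial, dotProduct, mulVec, hP, vecMulVec_apply, Finset.mul_sum]
        refine Finset.sum_congr rfl fun i _ => Finset.sum_congr rfl fun j _ => by ring
      rw [hcalc]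
      positivity
  have trace_mono : ∀ M : Matrix (Fin (m+1)) (Fin (m+1)) ℝ,
      (∀ i j, i ≠ j → 0 ≤ M i j) → (M * Xs).trace ≤ (M * P).trace := by
    intro M hM
    have hsub : (M * P).trace - (M * Xs).trace = ∑ i, ∑ j, M i j * (P j i - Xs j i) := by
      simp [Matrix.trace, Matrix.diag, Matrix.mul_apply, ← Finset.sum_sub_distrib, mul_sub]
    have hnn : 0 ≤ ∑ i, ∑ j, M i j * (P j i - Xs j i) := by
      refine Finset.sum_nonneg fun i _ => Finset.sum_nonneg fun j _ => ?_
      rcases eq_or_ne j i with rfl | hji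
      · simp [hPdiag j]
      · exact mul_nonneg (hM i j (Ne.symm hji)) (sub_nonneg.mpr (hentry j i))
    linarith [hsub ▸ hnn]
  have hQle : (Q * P).trace ≤ (Q * Xs).trace := by
    have := trace_mono (-Q) (fun i j hij => by simpa using hQsign i j hij)
    simp only [Matrix.neg_mul, Matrix.trace_neg] at this
    linarith
  refine ⟨x, hPpsd, ?_, ?_, ?_⟩
  · intro k
    refine le_trans (hAfeas k) (trace_mono (A k) fun i j hij => ?_)
    have := hAsign k i j hij
    simp only [Matrix.neg_apply] at this
    linarith
  · show P (Fin.last m) (Fin.last m) = 1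
    rw [hPdiag, ← htr Xs, hHfeas]
  · intro X hXpsd hXA hXnn
    exact le_trans hQle (hoptmin X hXpsd hXA (by rw [htr X, hXnn]))
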